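/- Let G be a parity game that is k-transducer live. Then G is winning for Player 2 against k-transducer environments: there exists a Player-2 strategy σ such that every infinite word that agrees with σ and agrees with some k-transducer for Player 1 generates a play that is winning for Player 2. -/

import Mathlib

/-- A two-player game arena: Player 1 plays actions from `A` at `V1`-vertices,
Player 2 plays actions from `B` at `V2`-vertices. `F1`/`F2` are the colorings. -/
structure Game (V1 V2 A B : Type) where
  E1 : V1 → A → V2
  E2 : V2 → B → V1
  init : V1
  F1 : V1 → ℕ
  F2 : V2 → ℕ

/-- A finite-state transducer with output alphabet `A`, input alphabet `B`
and state set `M`. -/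
structure Transducer (A B M : Type) where
  start : M
  step : M → B → M
  out : M → A

/-- The transition function extended to input words, starting from state `m`. -/
def Transducer.stepFrom {A B M : Type} (T : Transducer A B M) (m : M) (x : List B) : M :=
  x.foldl T.step m

/-- `L̂ : B* → A`, the output of the transducer after reading an input word. -/
def Transducer.outWord {A B M : Type} (T : Transducer A B M) (x : List B) : A :=
  T.out (T.stepFrom T.start x)

/-- The history (element of `(A×B)*`) consisting of the first `n` rounds of an
infinite word given by `a` and `b`. -/
def hist {A B : Type} (a : ℕ → A) (b : ℕ → B) (n : ℕ) : List (A × B) :=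
  (List.range n).map (fun i => (a i, b i))

/-- The infinite word `a₀b₀a₁b₁…` agrees with the Player-2 strategy `σ`. -/
def AgreesP2 {A B : Type} (σ : List (A × B) → A → B) (a : ℕ → A) (b : ℕ → B) : Prop :=
  ∀ n, b n = σ (hist a b n) (a n)

/-- The infinite word `a₀b₀a₁b₁…` agrees with the Player-1 strategy `τ`. -/
def AgreesP1 {A B : Type} (τ : List (A × B) → A) (a : ℕ → A) (b : ℕ → B) : Prop :=
  ∀ n, a n = τ (hist a b n)

/-- The Player-1 strategy `f_T` induced by a transducer `T`. -/
def Transducer.strat {A B M : Type} (T : Transducer A B M) : List (A × B) → A :=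
  fun h => T.outWord (h.map Prod.snd)

/-- An infinite word agrees with the transducer `T` (for Player 1). -/
def InfAgrees {A B M : Type} (T : Transducer A B M) (a : ℕ → A) (b : ℕ → B) : Prop :=
  AgreesP1 T.strat a b

/-- A finite word in `(A×B)*` agrees with the transducer `T` (for Player 1). -/
def FinAgrees {A B M : Type} (T : Transducer A B M) (w : List (A × B)) : Prop :=
  ∀ i : Fin w.length, (w.get i).1 = T.outWord ((w.take i.val).map Prod.snd)

/-- The infinite word given by `a`, `b` extends the finite word `w`. -/
def ExtendsWord {A B : Type} (w : List (A × B)) (a : ℕ → A) (b : ℕ → B) : Prop :=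
  ∀ i : Fin w.length, a i.val = (w.get i).1 ∧ b i.val = (w.get i).2

/-- The Player-1 vertices `u₀ u₁ u₂ …` of the play generated by the word
`a₀b₀a₁b₁…` from the Player-1 vertex `u0`. -/
def Game.playU {V1 V2 A B : Type} (G : Game V1 V2 A B) (u0 : V1) (a : ℕ → A) (b : ℕ → B) :
    ℕ → V1
  | 0 => u0
  | n + 1 => G.E2 (G.E1 (G.playU u0 a b n) (a n)) (b n)

/-- The sequence of colors `F(u₀) F(v₀) F(u₁) F(v₁) …` along the play generated
by the word `a₀b₀a₁b₁…` from `u0`. -/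
def Game.colorSeq {V1 V2 A B : Type} (G : Game V1 V2 A B) (u0 : V1) (a : ℕ → A) (b : ℕ → B)
    (n : ℕ) : ℕ :=
  if n % 2 = 0 then G.F1 (G.playU u0 a b (n / 2))
  else G.F2 (G.E1 (G.playU u0 a b (n / 2)) (a (n / 2)))

/-- Reachability winning condition for Player 2: some vertex of color 2 occurs. -/
def Game.reachWin {V1 V2 A B : Type} (G : Game V1 V2 A B) (u0 : V1) (a : ℕ → A) (b : ℕ → B) :
    Prop :=
  ∃ n, G.colorSeq u0 a b n = 2

/-- Parity winning condition for Player 2: the largest color occurring infinitely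
often along the play is even. -/
def Game.parityWin {V1 V2 A B : Type} (G : Game V1 V2 A B) (u0 : V1) (a : ℕ → A) (b : ℕ → B) :
    Prop :=
  ∃ c, Even c ∧ {n | G.colorSeq u0 a b n = c}.Infinite ∧
    ∀ d, {n | G.colorSeq u0 a b n = d}.Infinite → d ≤ c

/-- `G` is `k`-transducer live (for the parity winning condition): every finite word
agreeing with some `k`-transducer for Player 1 can be extended to an infinite word that
agrees with some `k`-transducer for Player 1 and whose play is winning for Player 2. -/
def Game.kLiveParity {V1 V2 A B : Type} (G : Game V1 V2 A B) (k : ℕ) : Prop :=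
  ∀ w : List (A × B), (∃ T : Transducer A B (Fin k), FinAgrees T w) →
    ∃ a b, ExtendsWord w a b ∧ (∃ T : Transducer A B (Fin k), InfAgrees T a b) ∧
      G.parityWin G.init a b

/-- `G` is `k`-transducer live (for the reachability winning condition). -/
def Game.kLiveReach {V1 V2 A B : Type} (G : Game V1 V2 A B) (k : ℕ) : Prop :=
  ∀ w : List (A × B), (∃ T : Transducer A B (Fin k), FinAgrees T w) →
    ∃ a b, ExtendsWord w a b ∧ (∃ T : Transducer A B (Fin k), InfAgrees T a b) ∧
      G.reachWin G.init a b

/-- The history of the unique word that agrees with the Player-1 strategy `τ` and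
the Player-2 strategy `σ`. -/
def inducedHist {A B : Type} (τ : List (A × B) → A) (σ : List (A × B) → A → B) :
    ℕ → List (A × B)
  | 0 => []
  | n + 1 =>
      let h := inducedHist τ σ n
      h ++ [(τ h, σ h (τ h))]

/-- The Player-1 actions of the unique word agreeing with `τ` and `σ`. -/
def inducedA {A B : Type} (τ : List (A × B) → A) (σ : List (A × B) → A → B) (n : ℕ) : A :=
  τ (inducedHist τ σ n)

/-- The Player-2 actions of the unique word agreeing with `τ` and `σ`. -/
def inducedB {A B : Type} (τ : List (A × B) → A) (σ : List (A × B) → A → B) (n : ℕ) : B :=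
  σ (inducedHist τ σ n) (inducedA τ σ n)

/-! ### Auxiliary material for the proof -/

section LiveAux

variable {A B M : Type}

instance Transducer.finite [Finite A] [Finite B] [Finite M] : Finite (Transducer A B M) :=
  Finite.of_injective (fun T => (T.start, T.step, T.out)) (by
    rintro ⟨s1, t1, o1⟩ ⟨s2, t2, o2⟩ h
    simp only [Prod.mk.injEq] at h
    simp [h.1, h.2.1, h.2.2])

@[simp] lemma length_hist (a : ℕ → A) (b : ℕ → B) (n : ℕ) : (hist a b n).length = n := by
  simp [hist]

@[simp] lemma getElem_hist (a : ℕ → A) (b : ℕ → B) {n i : ℕ} (h : i < (hist a b n).length) :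
    (hist a b n)[i] = (a i, b i) := by
  simp [hist]

lemma hist_succ (a : ℕ → A) (b : ℕ → B) (n : ℕ) :
    hist a b (n + 1) = hist a b n ++ [(a n, b n)] := by
  simp [hist, List.range_succ]

lemma take_hist (a : ℕ → A) (b : ℕ → B) {m n : ℕ} (h : m ≤ n) :
    (hist a b n).take m = hist a b m := by
  simp [hist, ← List.map_take, List.take_range, Nat.min_eq_left h]

lemma map_snd_hist (a : ℕ → A) (b : ℕ → B) (n : ℕ) :
    (hist a b n).map Prod.snd = (List.range n).map b := by
  simp [hist, List.map_map, Function.comp]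

lemma finAgrees_hist_iff (T : Transducer A B M) (a : ℕ → A) (b : ℕ → B) (n : ℕ) :
    FinAgrees T (hist a b n) ↔ ∀ i < n, a i = T.outWord ((List.range i).map b) := by
  constructor
  · intro h i hi
    have hl : i < (hist a b n).length := by simpa using hi
    have := h ⟨i, hl⟩
    simpa [List.get_eq_getElem, take_hist a b (le_of_lt hi), map_snd_hist] using this
  · intro h i
    have hi : i.val < n := by simpa using i.isLt
    have := h i.val hi
    simpa [List.get_eq_getElem, take_hist a b (le_of_lt hi), map_snd_hist] using this

lemma infAgrees_outWord {T : Transducer A B M} {a : ℕ → A} {b : ℕ → B}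
    (h : InfAgrees T a b) (n : ℕ) : a n = T.outWord ((List.range n).map b) := by
  have := h n
  simpa [Transducer.strat, map_snd_hist] using this

lemma infAgrees_finAgrees {T : Transducer A B M} {a : ℕ → A} {b : ℕ → B}
    (h : InfAgrees T a b) (n : ℕ) : FinAgrees T (hist a b n) :=
  (finAgrees_hist_iff T a b n).mpr fun i _ => infAgrees_outWord h i

-- The "base" (anchor) of a history: the point where the current plan was chosen.
open Classical in
noncomputable def baseRev (pA : List (A × B) → ℕ → A) : List (A × B) → List (A × B)
  | [] => []
  | x :: r =>
      let p := baseRev pA r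
      if x.1 = pA p r.length then p else (x :: r).reverse

noncomputable def base (pA : List (A × B) → ℕ → A) (h : List (A × B)) : List (A × B) :=
  baseRev pA h.reverse

@[simp] lemma base_nil (pA : List (A × B) → ℕ → A) : base pA [] = [] := rfl

open Classical in
lemma base_append (pA : List (A × B) → ℕ → A) (h : List (A × B)) (x : A × B) :
    base pA (h ++ [x]) =
      if x.1 = pA (base pA h) h.length then base pA h else h ++ [x] := by
  have : (h ++ [x]).reverse = x :: h.reverse := by simp
  rw [base, this, baseRev]
  simp [base]
  exact if_congr Iff.rfl rfl rfl

end LiveAux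

/-- **Theorem 3, first part.** A `k`-transducer live parity game `G`
is winning for Player 2 against `k`-transducer environments: there is a Player-2
strategy `σ` such that every infinite word that agrees with `σ` and agrees with some
`k`-transducer for Player 1 generates a play that is winning for Player 2. -/
theorem live_game_winning_for_p2
    {V1 V2 A B : Type} [Fintype V1] [Fintype V2] [Fintype A] [Fintype B]
    [Nonempty A] [Nonempty B]
    (G : Game V1 V2 A B) (k : ℕ) (hlive : G.kLiveParity k) :
    ∃ σ : List (A × B) → A → B,
      ∀ (a : ℕ → A) (b : ℕ → B), AgreesP2 σ a b →
        (∃ T : Transducer A B (Fin k), InfAgrees T a b) →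
        G.parityWin G.init a b := by
  classical
  -- Choose, for each consistent history, a winning extension ("plan").
  choose pa0 pb0 hext0 hagr0 hwin0 using hlive
  set C : List (A × B) → Prop := fun w => ∃ T : Transducer A B (Fin k), FinAgrees T w with hC
  let P : List (A × B) → (ℕ → A) × (ℕ → B) := fun w =>
    if hc : C w then (pa0 w hc, pb0 w hc)
    else (fun _ => Classical.arbitrary A, fun _ => Classical.arbitrary B)
  let pA : List (A × B) → ℕ → A := fun w => (P w).1
  let pB : List (A × B) → ℕ → B := fun w => (P w).2
  have hP : ∀ w, C w → ExtendsWord w (pA w) (pB w) ∧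
      (∃ T : Transducer A B (Fin k), InfAgrees T (pA w) (pB w)) ∧
      G.parityWin G.init (pA w) (pB w) := by
    intro w hc
    simp only [pA, pB, P, dif_pos hc]
    exact ⟨hext0 w hc, hagr0 w hc, hwin0 w hc⟩
  -- The strategy: follow the plan chosen at the current base.
  refine ⟨fun h x => if x = pA (base pA h) h.length then pB (base pA h) h.length
    else Classical.arbitrary B, ?_⟩
  intro a b hσ hT'
  obtain ⟨T', hT'⟩ := hT'
  have hcons : ∀ n, C (hist a b n) := fun n => ⟨T', infAgrees_finAgrees hT' n⟩
  set Bn : ℕ → List (A × B) := fun n => base pA (hist a b n) with hBn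
  have hB0 : Bn 0 = [] := by simp [Bn, hist]
  have hBrec : ∀ n, Bn (n + 1) =
      if a n = pA (Bn n) n then Bn n else hist a b (n + 1) := by
    intro n
    simp only [Bn, hist_succ a b n, base_append]
    simp
  -- The base is always some history prefix.
  have hBhist : ∀ n, ∃ m ≤ n, Bn n = hist a b m := by
    intro n
    induction n with
    | zero => exact ⟨0, le_refl 0, by simp [hB0, hist]⟩
    | succ n ih =>
      rcases ih with ⟨m, hm, hBm⟩
      rw [hBrec n]
      by_cases hd : a n = pA (Bn n) n
      · exact ⟨m, by omega, by rw [if_pos hd]; exact hBm⟩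
      · exact ⟨n + 1, le_refl _, by rw [if_neg hd]⟩
  have hconsB : ∀ n, C (Bn n) := by
    intro n; rcases hBhist n with ⟨m, _, hBm⟩; rw [hBm]; exact hcons m
  -- Agreement with the strategy.
  have hb : ∀ n, a n = pA (Bn n) n → b n = pB (Bn n) n := by
    intro n hd
    have := hσ n
    rw [this]
    simp only [length_hist, ← hBn]
    rw [if_pos hd]
  -- Following invariant: from the base on, the word follows the plan.
  have hfollow : ∀ n, ∀ i, (Bn n).length ≤ i → i < n →
      a i = pA (Bn n) i ∧ b i = pB (Bn n) i := by
    intro n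
    induction n with
    | zero => intro i _ h2; omega
    | succ n ih =>
      intro i h1 h2
      by_cases hd : a n = pA (Bn n) n
      · have hB : Bn (n + 1) = Bn n := by rw [hBrec n, if_pos hd]
        rw [hB] at h1 ⊢
        rcases Nat.lt_or_ge i n with hi | hi
        · exact ih i h1 hi
        · have : i = n := by omega
          subst this
          exact ⟨hd, hb i hd⟩
      · have hB : Bn (n + 1) = hist a b (n + 1) := by rw [hBrec n, if_neg hd]
        rw [hB, length_hist] at h1
        omega
  -- Up to position `n`, the word coincides with the plan chosen at `Bn n`.
  have hExt : ∀ n, ∀ i < n, a i = pA (Bn n) i ∧ b i = pB (Bn n) i := by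
    intro n i hi
    rcases Nat.lt_or_ge i (Bn n).length with h1 | h1
    · rcases hBhist n with ⟨m, _, hBm⟩
      have hext := (hP (Bn n) (hconsB n)).1
      rw [hBm] at hext h1
      have := hext ⟨i, h1⟩
      simp only [List.get_eq_getElem, getElem_hist] at this
      rw [hBm]
      exact ⟨this.1.symm, this.2.symm⟩
    · exact hfollow n i h1 hi
  -- The witness transducer of the plan chosen at time `n`.
  let f : ℕ → Transducer A B (Fin k) := fun n =>
    Classical.choose (hP (Bn n) (hconsB n)).2.1
  have hf : ∀ n, InfAgrees (f n) (pA (Bn n)) (pB (Bn n)) := fun n =>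
    Classical.choose_spec (hP (Bn n) (hconsB n)).2.1
  -- The plan witness agrees with the actual history up to `n`.
  have hc1 : ∀ n, FinAgrees (f n) (hist a b n) := by
    intro n
    rw [finAgrees_hist_iff]
    intro i hi
    have h1 := (hExt n i hi).1
    have h2 : (List.range i).map b = (List.range i).map (pB (Bn n)) := by
      apply List.map_congr_left
      intro j hj
      rw [List.mem_range] at hj
      exact (hExt n j (by omega)).2
    rw [h1, h2]
    exact infAgrees_outWord (hf n) i
  -- On deviation, the plan witness is eliminated.
  have hc2 : ∀ n, a n ≠ pA (Bn n) n → ¬ FinAgrees (f n) (hist a b (n + 1)) := by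
    intro n hd hFA
    rw [finAgrees_hist_iff] at hFA
    have h2 : (List.range n).map b = (List.range n).map (pB (Bn n)) := by
      apply List.map_congr_left
      intro j hj
      rw [List.mem_range] at hj
      exact (hExt n j hj).2
    have := hFA n (by omega)
    rw [h2, ← infAgrees_outWord (hf n) n] at this
    exact hd this
  -- Consistency is antitone along histories.
  have hmono : ∀ (T : Transducer A B (Fin k)) (m n : ℕ), m ≤ n →
      FinAgrees T (hist a b n) → FinAgrees T (hist a b m) := by
    intro T m n hmn hFA
    rw [finAgrees_hist_iff] at hFA ⊢
    intro i hi
    exact hFA i (by omega)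
  -- The set of deviation times is finite.
  have hDfin : {n | a n ≠ pA (Bn n) n}.Finite := by
    by_contra hinf
    have hinf : {n | a n ≠ pA (Bn n) n}.Infinite := hinf
    have key : ∀ m m', m < m' → a m ≠ pA (Bn m) m → f m ≠ f m' := by
      intro m m' hlt hm hfe
      have h1 : ¬ FinAgrees (f m) (hist a b m') := fun h =>
        hc2 m hm (hmono _ _ _ (by omega) h)
      exact h1 (hfe ▸ hc1 m')
    have hinj : Set.InjOn f {n | a n ≠ pA (Bn n) n} := by
      intro n hn n' hn' hfe
      rcases lt_trichotomy n n' with h | h | h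
      · exact absurd hfe (key n n' h hn)
      · exact h
      · exact absurd hfe.symm (key n' n h hn')
    exact (Set.toFinite (f '' {n | a n ≠ pA (Bn n) n})).not_infinite
      (Set.Infinite.image hinj hinf)
  -- Beyond all deviations, the base stabilizes and the word follows one fixed plan.
  obtain ⟨N0, hN0⟩ := hDfin.bddAbove
  set N : ℕ := N0 + 1 with hNdef
  have hN : ∀ n, N ≤ n → a n = pA (Bn n) n := by
    intro n hn
    by_contra hd
    have := hN0 hd
    omega
  have hstab : ∀ n, N ≤ n → Bn n = Bn N := by
    intro n hn
    induction n with
    | zero => omega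
    | succ n ih =>
      rcases Nat.lt_or_ge n N with h | h
      · have : N = n + 1 := by omega
        rw [this]
      · rw [hBrec n, if_pos (hN n h), ih h]
  -- The actual word equals the final plan word.
  have hfinal : ∀ i, a i = pA (Bn N) i ∧ b i = pB (Bn N) i := by
    intro i
    have h1 := hExt (max (i + 1) N) i (by omega)
    rw [hstab (max (i + 1) N) (le_max_right _ _)] at h1
    exact h1
  have ha : a = pA (Bn N) := funext fun i => (hfinal i).1
  have hbfun : b = pB (Bn N) := funext fun i => (hfinal i).2
  rw [ha, hbfun]
  exact (hP (Bn N) (hconsB N)).2.2
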